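/- In a simple probabilistic relation under an injective scoring function, Global-Topk satisfies Faithfulness: if p(t_1) > p(t_2) and t_1 has higher score than t_2 (i.e., the index of t_1 is smaller than that of t_2 in the score-sorted order), then the Global-Topk probability of t_1 is strictly greater than that of t_2, for any k ≥ 1. -/

import Mathlib

open Finset

/-- Faithfulness of Global-Topk in a simple probabilistic relation: if tuple `i1`
has a higher score (smaller index in the score-sorted order) and a higher
probability than tuple `i2`, then its Global-Topk probability is strictly larger. -/
theorem globalTopk_faithfulness (n : ℕ) (p : ℕ → ℝ)
    (hp : ∀ i ∈ Finset.Icc 1 n, p i ∈ Set.Ioo (0 : ℝ) 1)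
    (q : ℕ → ℕ → ℝ)
    (hq : ∀ k i, q k i =
      ∑ W ∈ (Finset.Icc 1 n).powerset.filter
          (fun W => i ∈ W ∧ (W.filter (fun j => j < i)).card < k),
        (∏ j ∈ W, p j) * ∏ j ∈ Finset.Icc 1 n \ W, (1 - p j))
    (k i1 i2 : ℕ) (hk : 1 ≤ k)
    (hi1 : i1 ∈ Finset.Icc 1 n) (hi2 : i2 ∈ Finset.Icc 1 n)
    (hscore : i1 < i2) (hprob : p i2 < p i1) :
    q k i2 < q k i1 := by
  classical
  set I : Finset ℕ := Finset.Icc 1 n with hI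
  set w : Finset ℕ → ℝ := fun W => (∏ j ∈ W, p j) * ∏ j ∈ I \ W, (1 - p j) with hwdef
  set A : ℕ → Finset (Finset ℕ) :=
    fun i => I.powerset.filter (fun W => i ∈ W ∧ (W.filter (fun j => j < i)).card < k)
    with hAdef
  have hne : i1 ≠ i2 := Nat.ne_of_lt hscore
  set φ : Finset ℕ → Finset ℕ := fun W => if i1 ∈ W then W else insert i1 (W.erase i2)
    with hφdef
  have hpos : ∀ j ∈ I, 0 < p j := fun j hj => (hp j hj).1
  have hlt1 : ∀ j ∈ I, p j < 1 := fun j hj => (hp j hj).2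
  have hwnonneg : ∀ W : Finset ℕ, W ⊆ I → 0 ≤ w W := by
    intro W hWI
    have h1 : 0 ≤ ∏ j ∈ W, p j := Finset.prod_nonneg (fun j hj => (hpos j (hWI hj)).le)
    have h2 : 0 ≤ ∏ j ∈ I \ W, (1 - p j) := Finset.prod_nonneg (fun j hj => by
      have := hlt1 j (mem_sdiff.mp hj).1; linarith)
    exact mul_nonneg h1 h2
  -- the swap strictly increases weight
  have hswap : ∀ W ∈ A i2, i1 ∉ W → w W < w (insert i1 (W.erase i2)) := by
    intro W hW h1W
    have hWI : W ⊆ I := mem_powerset.mp (mem_filter.mp hW).1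
    have hi2W : i2 ∈ W := (mem_filter.mp hW).2.1
    have hi2I : i2 ∈ I := hWI hi2W
    have h1e : i1 ∉ W.erase i2 := fun h => h1W (mem_of_mem_erase h)
    have h1c : i1 ∈ I \ W := mem_sdiff.mpr ⟨hi1, h1W⟩
    have h2c : i2 ∉ (I \ W).erase i1 := fun h => (mem_sdiff.mp (mem_of_mem_erase h)).2 hi2W
    have hcomp : I \ insert i1 (W.erase i2) = insert i2 ((I \ W).erase i1) := by
      ext j
      simp only [mem_sdiff, mem_insert, mem_erase]
      constructor
      · rintro ⟨hjI, hj⟩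
        push_neg at hj
        obtain ⟨hj1, hj2⟩ := hj
        by_cases hji2 : j = i2
        · exact Or.inl hji2
        · exact Or.inr ⟨hj1, hjI, fun hjW => (hj2 hji2) hjW⟩
      · rintro (rfl | ⟨hj1, hjI, hjW⟩)
        · refine ⟨hi2I, ?_⟩
          push_neg
          exact ⟨fun h => hne h.symm, fun h hh => h rfl⟩
        · refine ⟨hjI, ?_⟩
          push_neg
          exact ⟨hj1, fun _ hh => hjW hh⟩
    have e1 : ∏ j ∈ W, p j = p i2 * ∏ j ∈ W.erase i2, p j :=
      (Finset.mul_prod_erase W p hi2W).symm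
    have e2 : ∏ j ∈ insert i1 (W.erase i2), p j = p i1 * ∏ j ∈ W.erase i2, p j :=
      Finset.prod_insert h1e
    have e3 : ∏ j ∈ I \ W, (1 - p j)
        = (1 - p i1) * ∏ j ∈ (I \ W).erase i1, (1 - p j) :=
      (Finset.mul_prod_erase _ _ h1c).symm
    have e4 : ∏ j ∈ I \ insert i1 (W.erase i2), (1 - p j)
        = (1 - p i2) * ∏ j ∈ (I \ W).erase i1, (1 - p j) := by
      rw [hcomp, Finset.prod_insert h2c]
    have hC1 : 0 < ∏ j ∈ W.erase i2, p j :=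
      Finset.prod_pos fun j hj => hpos j (hWI (mem_of_mem_erase hj))
    have hC2 : 0 < ∏ j ∈ (I \ W).erase i1, (1 - p j) :=
      Finset.prod_pos fun j hj => by
        have := hlt1 j (mem_sdiff.mp (mem_of_mem_erase hj)).1; linarith
    have hp1 := hp i1 hi1
    have hp2 := hp i2 hi2
    show (∏ j ∈ W, p j) * ∏ j ∈ I \ W, (1 - p j)
        < (∏ j ∈ insert i1 (W.erase i2), p j) * ∏ j ∈ I \ insert i1 (W.erase i2), (1 - p j)
    rw [e1, e2, e3, e4]
    nlinarith [mul_pos (mul_pos (sub_pos.mpr hprob) hC1) hC2, hp1.1, hp1.2, hp2.1, hp2.2]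
  -- φ maps A i2 into A i1
  have hφmem : ∀ W ∈ A i2, φ W ∈ A i1 := by
    intro W hW
    have hWp : W ⊆ I := mem_powerset.mp (mem_filter.mp hW).1
    have hi2W : i2 ∈ W := (mem_filter.mp hW).2.1
    have hcard : (W.filter (fun j => j < i2)).card < k := (mem_filter.mp hW).2.2
    by_cases h : i1 ∈ W
    · have hφW : φ W = W := if_pos h
      rw [hφW]
      refine mem_filter.mpr ⟨mem_powerset.mpr hWp, h, ?_⟩
      refine lt_of_le_of_lt (Finset.card_le_card ?_) hcard
      intro j hj
      obtain ⟨hjW, hjlt⟩ := mem_filter.mp hj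
      exact mem_filter.mpr ⟨hjW, lt_trans hjlt hscore⟩
    · have hφW : φ W = insert i1 (W.erase i2) := if_neg h
      rw [hφW]
      refine mem_filter.mpr ⟨mem_powerset.mpr ?_, mem_insert_self _ _, ?_⟩
      · intro j hj
        rcases mem_insert.mp hj with rfl | hj
        · exact hi1
        · exact hWp (mem_of_mem_erase hj)
      · refine lt_of_le_of_lt (Finset.card_le_card ?_) hcard
        intro j hj
        obtain ⟨hjW, hjlt⟩ := mem_filter.mp hj
        rcases mem_insert.mp hjW with rfl | hj'
        · omega
        · exact mem_filter.mpr ⟨mem_of_mem_erase hj', lt_trans hjlt hscore⟩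
  -- φ is injective on A i2
  have hinj : ∀ W ∈ A i2, ∀ W' ∈ A i2, φ W = φ W' → W = W' := by
    intro W hW W' hW' hEq
    have h2W : i2 ∈ W := (mem_filter.mp hW).2.1
    have h2W' : i2 ∈ W' := (mem_filter.mp hW').2.1
    by_cases h : i1 ∈ W <;> by_cases h' : i1 ∈ W'
    · rw [hφdef] at hEq; simpa [if_pos h, if_pos h'] using hEq
    · exfalso
      rw [hφdef] at hEq
      simp only [if_pos h, if_neg h'] at hEq
      have : i2 ∈ insert i1 (W'.erase i2) := hEq ▸ h2W
      rcases mem_insert.mp this with h'' | h''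
      · exact hne h''.symm
      · exact (mem_erase.mp h'').1 rfl
    · exfalso
      rw [hφdef] at hEq
      simp only [if_neg h, if_pos h'] at hEq
      have : i2 ∈ insert i1 (W.erase i2) := hEq.symm ▸ h2W'
      rcases mem_insert.mp this with h'' | h''
      · exact hne h''.symm
      · exact (mem_erase.mp h'').1 rfl
    · rw [hφdef] at hEq
      simp only [if_neg h, if_neg h'] at hEq
      have h1e : i1 ∉ W.erase i2 := fun hh => h (mem_of_mem_erase hh)
      have h1e' : i1 ∉ W'.erase i2 := fun hh => h' (mem_of_mem_erase hh)
      have hEq2 : W.erase i2 = W'.erase i2 := by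
        have := congrArg (fun s => Finset.erase s i1) hEq
        simpa [Finset.erase_insert h1e, Finset.erase_insert h1e'] using this
      calc W = insert i2 (W.erase i2) := (Finset.insert_erase h2W).symm
        _ = insert i2 (W'.erase i2) := by rw [hEq2]
        _ = W' := Finset.insert_erase h2W'
  -- the strict witness {i2}
  have hW0 : ({i2} : Finset ℕ) ∈ A i2 := by
    refine mem_filter.mpr ⟨mem_powerset.mpr ?_, mem_singleton_self i2, ?_⟩
    · intro j hj; rw [mem_singleton.mp hj]; exact hi2
    · have : ({i2} : Finset ℕ).filter (fun j => j < i2) = ∅ := by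
        simp [Finset.filter_singleton]
      rw [this]
      simp only [card_empty]; omega
  have h1notin : i1 ∉ ({i2} : Finset ℕ) := fun hh => hne (mem_singleton.mp hh)
  -- termwise ≤
  have hle : ∀ W ∈ A i2, w W ≤ w (φ W) := by
    intro W hW
    by_cases h : i1 ∈ W
    · have h2 : φ W = W := if_pos h
      rw [h2]
    · have h2 : φ W = insert i1 (W.erase i2) := if_neg h
      rw [h2]
      exact (hswap W hW h).le
  have hstrict : w ({i2} : Finset ℕ) < w (φ ({i2} : Finset ℕ)) := by
    have h2 : φ ({i2} : Finset ℕ) = insert i1 (({i2} : Finset ℕ).erase i2) := if_neg h1notin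
    rw [h2]
    exact hswap ({i2} : Finset ℕ) hW0 h1notin
  have himg : (A i2).image φ ⊆ A i1 := by
    intro V hV
    obtain ⟨W, hW, rfl⟩ := mem_image.mp hV
    exact hφmem W hW
  have key : ∑ W ∈ A i2, w W < ∑ W ∈ A i1, w W := by
    calc ∑ W ∈ A i2, w W
        < ∑ W ∈ A i2, w (φ W) :=
          Finset.sum_lt_sum hle ⟨({i2} : Finset ℕ), hW0, hstrict⟩
      _ = ∑ V ∈ (A i2).image φ, w V := (Finset.sum_image hinj).symm
      _ ≤ ∑ V ∈ A i1, w V := by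
          refine Finset.sum_le_sum_of_subset_of_nonneg himg ?_
          intro V hV _
          exact hwnonneg V (mem_powerset.mp (mem_filter.mp hV).1)
  rw [hq k i2, hq k i1]
  exact key
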